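/- Refined union bound of Khabbazi Oskouei–Mancini–Wilde: with the sequential measurement setup and any p, p' > 0 with 1/p + 1/p' = 1, one has Fail − ε₁ ≤ p'·ε₁ + (p+p')·Σ_{1<t<m} ε_t + p·ε_m. -/

import Mathlib

open Matrix ComplexOrder

/-- The Schatten 1-norm (trace norm): ‖M‖₁ = tr √(MᴴM). -/
noncomputable def traceNorm {n m : Type*} [Fintype n] [Fintype m] [DecidableEq m]
    (M : Matrix n m ℂ) : ℝ :=
  (((Matrix.posSemidef_conjTranspose_mul_self M).1.eigenvectorUnitary.1 *
      diagonal (((↑) : ℝ → ℂ) ∘ (√·) ∘ (Matrix.posSemidef_conjTranspose_mul_self M).1.eigenvalues) *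
      (star (Matrix.posSemidef_conjTranspose_mul_self M).1.eigenvectorUnitary :
        Matrix m m ℂ)).trace).re

section RQUBAux

/-- Embedding of matrices into Euclidean space (Frobenius geometry). -/
noncomputable def rqubE {d : ℕ} (M : Matrix (Fin d) (Fin d) ℂ) :
    EuclideanSpace ℂ (Fin d × Fin d) := WithLp.toLp 2 (fun p : Fin d × Fin d => M p.1 p.2)

lemma rqubE_inner {d : ℕ} (X Y : Matrix (Fin d) (Fin d) ℂ) :
    (inner ℂ (rqubE X) (rqubE Y) : ℂ) = (Xᴴ * Y).trace := by
  simp [PiLp.inner_apply, rqubE, Matrix.trace, Matrix.mul_apply,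
    Matrix.conjTranspose_apply, Matrix.diag, Fintype.sum_prod_type]
  rw [Finset.sum_comm]
  exact Finset.sum_congr rfl fun _ _ => Finset.sum_congr rfl fun _ _ => mul_comm _ _

lemma rqubE_norm_sq {d : ℕ} (X : Matrix (Fin d) (Fin d) ℂ) :
    ‖rqubE X‖ ^ 2 = ((Xᴴ * X).trace).re := by
  rw [← rqubE_inner, ← inner_self_eq_norm_sq (𝕜 := ℂ) (rqubE X)]
  rfl

lemma rqubE_add {d : ℕ} (X Y : Matrix (Fin d) (Fin d) ℂ) :
    rqubE (X + Y) = rqubE X + rqubE Y := rfl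

lemma rqubE_sub {d : ℕ} (X Y : Matrix (Fin d) (Fin d) ℂ) :
    rqubE (X - Y) = rqubE X - rqubE Y := rfl

lemma rqub_split {d : ℕ} (P M : Matrix (Fin d) (Fin d) ℂ) (hH : Pᴴ = P) (hP : P * P = P) :
    ‖rqubE M‖ ^ 2 = ‖rqubE (P * M)‖ ^ 2 + ‖rqubE ((1 - P) * M)‖ ^ 2 := by
  have hH' : (1 - P)ᴴ = 1 - P := by rw [conjTranspose_sub, conjTranspose_one, hH]
  have hP' : (1 - P) * (1 - P) = 1 - P := by
    have : (1 - P) * (1 - P) = 1 - P - P + P * P := by noncomm_ring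
    rw [this, hP]; abel
  have h1 : (P * M)ᴴ * (P * M) = Mᴴ * (P * M) := by
    rw [conjTranspose_mul, hH, mul_assoc, ← mul_assoc P P M, hP]
  have h2 : ((1 - P) * M)ᴴ * ((1 - P) * M) = Mᴴ * ((1 - P) * M) := by
    rw [conjTranspose_mul, hH', mul_assoc, ← mul_assoc (1 - P) (1 - P) M, hP']
  have h3 : Mᴴ * (P * M) + Mᴴ * ((1 - P) * M) = Mᴴ * M := by noncomm_ring
  rw [rqubE_norm_sq M, rqubE_norm_sq, rqubE_norm_sq, h1, h2, ← Complex.add_re,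
    ← Matrix.trace_add, h3]

lemma rqub_contract {d : ℕ} (P M : Matrix (Fin d) (Fin d) ℂ) (hH : Pᴴ = P)
    (hP : P * P = P) : ‖rqubE ((1 - P) * M)‖ ≤ ‖rqubE M‖ := by
  have h := rqub_split P M hH hP
  have h2 : ‖rqubE ((1 - P) * M)‖ ^ 2 ≤ ‖rqubE M‖ ^ 2 := by
    nlinarith [sq_nonneg ‖rqubE (P * M)‖]
  exact (pow_le_pow_iff_left₀ (norm_nonneg _) (norm_nonneg _) two_ne_zero).mp h2

lemma rqub_cross {d : ℕ} (Q C : Matrix (Fin d) (Fin d) ℂ) (hQH : Qᴴ = Q)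
    (hQP : Q * Q = Q) :
    (1 - C)ᴴ * (Q * C) = Qᴴ * (Q * C) - (Q * C)ᴴ * (Q * C) := by
  have e1 : (1 - C)ᴴ * (Q * C) = Q * C - Cᴴ * (Q * C) := by
    rw [conjTranspose_sub, conjTranspose_one, sub_mul, one_mul]
  have e2 : Qᴴ * (Q * C) = Q * C := by rw [hQH, ← mul_assoc, hQP]
  have e3 : (Q * C)ᴴ * (Q * C) = Cᴴ * (Q * C) := by
    rw [conjTranspose_mul, hQH, mul_assoc, ← mul_assoc Q Q C, hQP]
  rw [e1, e2, e3]

lemma rqub_step (p p' e q : ℝ) (hp : 0 < p) (hp' : 0 < p') (hmul : p * p' = p + p') :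
    q ^ 2 + p' * (2 * e * q - q ^ 2) ≤ (p + p') * e ^ 2 := by
  have key : p * ((p + p') * e ^ 2 - (q ^ 2 + p' * (2 * e * q - q ^ 2)))
      = p' * (q - p * e) ^ 2 := by linear_combination (q ^ 2 - p * e ^ 2) * hmul
  nlinarith [mul_nonneg hp'.le (sq_nonneg (q - p * e))]

lemma rqub_induction (q e D F : ℕ → ℝ) (p p' : ℝ) (hp : 0 < p) (hp' : 0 < p')
    (hmul : p * p' = p + p')
    (hF : ∀ k, F (k + 1) = F k + q k ^ 2)
    (hd : ∀ k, D (k + 1) ^ 2 ≤ D k ^ 2 - q k ^ 2 + 2 * e k * q k)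
    (base : F 1 + p' * D 1 ^ 2 ≤ (1 + p') * e 0 ^ 2) :
    ∀ k, F (k + 1) + p' * D (k + 1) ^ 2 ≤
      (1 + p') * e 0 ^ 2 + (p + p') * ∑ t ∈ Finset.Ico 1 (k + 1), e t ^ 2 := by
  intro k
  induction k with
  | zero => simpa using base
  | succ n ih =>
    have h1 := hF (n + 1)
    have h2 := mul_le_mul_of_nonneg_left (hd (n + 1)) hp'.le
    have h3 := rqub_step p p' (e (n + 1)) (q (n + 1)) hp hp' hmul
    have hsum : ∑ t ∈ Finset.Ico 1 (n + 1 + 1), e t ^ 2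
        = (∑ t ∈ Finset.Ico 1 (n + 1), e t ^ 2) + e (n + 1) ^ 2 :=
      Finset.sum_Ico_succ_top (by omega) _
    rw [hsum]
    nlinarith [ih]

/-- Sequential product of the (extended) projector family. -/
noncomputable def rqubB {d : ℕ} (A' : ℕ → Matrix (Fin d) (Fin d) ℂ) :
    ℕ → Matrix (Fin d) (Fin d) ℂ
  | 0 => 1
  | (k + 1) => A' k * rqubB A' k

end RQUBAux

set_option maxHeartbeats 2000000 in
/-- Refined union bound of Khabbazi Oskouei–Mancini–Wilde. -/
theorem refined_quantum_union_bound
    {d m : ℕ} (ρ : Matrix (Fin d) (Fin d) ℂ)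
    (hρ : ρ.PosSemidef) (hρ1 : ρ.trace = 1)
    (A : Fin m → Matrix (Fin d) (Fin d) ℂ)
    (hAherm : ∀ t, (A t).IsHermitian) (hAproj : ∀ t, A t * A t = A t)
    (ε : Fin m → ℝ) (hε : ∀ t, ε t = ((ρ * (1 - A t)).trace).re)
    (ρseq : Fin (m + 1) → Matrix (Fin d) (Fin d) ℂ)
    (h0 : ρseq 0 = ρ)
    (hprob : ∀ t : Fin m, 0 < ((ρseq t.castSucc * A t).trace).re)
    (hrec : ∀ t : Fin m, ρseq t.succ =
      ((ρseq t.castSucc * A t).trace)⁻¹ • (A t * ρseq t.castSucc * A t))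
    (Succ Fail Loss : ℝ)
    (hSucc : Succ = ((((List.ofFn A).reverse.prod) * ρ * ((List.ofFn A).reverse.prod)ᴴ).trace).re)
    (hFail : Fail = 1 - Succ)
    (hLoss : Loss = ∑ t, ε t)
    (hm2 : 2 ≤ m) (p p' : ℝ) (hp : 0 < p) (hp' : 0 < p') (hpp : 1 / p + 1 / p' = 1) :
    Fail - ε ⟨0, by omega⟩ ≤
      p' * ε ⟨0, by omega⟩ +
        (p + p') * ∑ t ∈ Finset.univ.filter (fun t : Fin m => 0 < t.val ∧ t.val < m - 1), ε t +
        p * ε ⟨m - 1, by omega⟩ := by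
  classical
  -- numeric facts
  have hmul : p * p' = p + p' := by field_simp at hpp; linarith
  have hp1 : 1 < p := by nlinarith
  have hfac : (p - 1) * (p' - 1) = 1 := by linear_combination hmul
  -- square root of ρ
  obtain ⟨r, hrH, hrr⟩ : ∃ r : Matrix (Fin d) (Fin d) ℂ, rᴴ = r ∧ r * r = ρ := by
    open scoped MatrixOrder in
    obtain ⟨X, hX, -, h⟩ := CFC.exists_sqrt_of_isSelfAdjoint_of_quasispectrumRestricts
      hρ.isHermitian (QuasispectrumRestricts.nnreal_of_nonneg hρ.nonneg)
    exact ⟨X, hX.star_eq, h⟩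
  -- extended family
  set A' : ℕ → Matrix (Fin d) (Fin d) ℂ :=
    fun k => if h : k < m then A ⟨k, h⟩ else 1 with hA'def
  have hA'H : ∀ k, (A' k)ᴴ = A' k := by
    intro k
    simp only [hA'def]
    split_ifs with h
    · exact hAherm _
    · exact conjTranspose_one
  have hA'proj : ∀ k, A' k * A' k = A' k := by
    intro k
    simp only [hA'def]
    split_ifs with h
    · exact hAproj _
    · exact one_mul 1
  have hQH : ∀ k, (1 - A' k)ᴴ = 1 - A' k := by
    intro k; rw [conjTranspose_sub, conjTranspose_one, hA'H]
  have hQP : ∀ k, (1 - A' k) * (1 - A' k) = 1 - A' k := by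
    intro k
    have : (1 - A' k) * (1 - A' k) = 1 - A' k - A' k + A' k * A' k := by noncomm_ring
    rw [this, hA'proj]; abel
  set B := rqubB A' with hBdef
  have hB0 : B 0 = 1 := rfl
  have hBs : ∀ k, B (k + 1) = A' k * B k := fun _ => rfl
  -- trace helper
  have key_tr : ∀ X Y : Matrix (Fin d) (Fin d) ℂ,
      (inner ℂ (rqubE (X * r)) (rqubE (Y * r)) : ℂ) = (Xᴴ * Y * ρ).trace := by
    intro X Y
    rw [rqubE_inner]
    have h1 : (X * r)ᴴ * (Y * r) = r * (Xᴴ * Y) * r := by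
      rw [conjTranspose_mul, hrH]; noncomm_ring
    rw [h1]
    calc (r * (Xᴴ * Y) * r).trace = (r * (r * (Xᴴ * Y))).trace :=
          Matrix.trace_mul_comm _ _
      _ = (ρ * (Xᴴ * Y)).trace := by rw [← mul_assoc, hrr]
      _ = (Xᴴ * Y * ρ).trace := Matrix.trace_mul_comm _ _
  have key_norm : ∀ X : Matrix (Fin d) (Fin d) ℂ,
      ‖rqubE (X * r)‖ ^ 2 = ((Xᴴ * X * ρ).trace).re := by
    intro X
    rw [← key_tr X X, ← inner_self_eq_norm_sq (𝕜 := ℂ) (rqubE (X * r))]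
    rfl
  -- the real sequences
  set q : ℕ → ℝ := fun k => ‖rqubE ((1 - A' k) * B k * r)‖ with hqdef
  set e : ℕ → ℝ := fun k => ‖rqubE ((1 - A' k) * r)‖ with hedef
  set Dn : ℕ → ℝ := fun k => ‖rqubE ((1 - B k) * r)‖ with hDdef
  set F : ℕ → ℝ := fun k => 1 - ‖rqubE (B k * r)‖ ^ 2 with hFdef
  -- recursion for F
  have hF_rec : ∀ k, F (k + 1) = F k + q k ^ 2 := by
    intro k
    have h := rqub_split (A' k) (B k * r) (hA'H k) (hA'proj k)
    have ha1 : B (k + 1) * r = A' k * (B k * r) := by rw [hBs k, mul_assoc]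
    have ha2 : (1 - A' k) * B k * r = (1 - A' k) * (B k * r) := mul_assoc _ _ _
    show 1 - ‖rqubE (B (k + 1) * r)‖ ^ 2
        = (1 - ‖rqubE (B k * r)‖ ^ 2) + ‖rqubE ((1 - A' k) * B k * r)‖ ^ 2
    rw [ha1, ha2]
    linarith
  -- recursion (inequality) for Dn
  have hd_rec : ∀ k, Dn (k + 1) ^ 2 ≤ Dn k ^ 2 - q k ^ 2 + 2 * e k * q k := by
    intro k
    have hsplit : (1 - B (k + 1)) * r = (1 - B k) * r + ((1 - A' k) * B k) * r := by
      rw [hBs k]; noncomm_ring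
    have hnadd : ‖rqubE ((1 - B (k + 1)) * r)‖ ^ 2
        = ‖rqubE ((1 - B k) * r)‖ ^ 2
          + 2 * (RCLike.re (inner ℂ (rqubE ((1 - B k) * r))
              (rqubE (((1 - A' k) * B k) * r)) : ℂ))
          + ‖rqubE (((1 - A' k) * B k) * r)‖ ^ 2 := by
      rw [hsplit, rqubE_add]
      exact norm_add_sq _ _
    have hcross : (1 - B k)ᴴ * ((1 - A' k) * B k) * ρ
        = (1 - A' k)ᴴ * ((1 - A' k) * B k) * ρ
          - ((1 - A' k) * B k)ᴴ * ((1 - A' k) * B k) * ρ := by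
      rw [rqub_cross (1 - A' k) (B k) (hQH k) (hQP k)]; noncomm_ring
    have hinner : (RCLike.re (inner ℂ (rqubE ((1 - B k) * r))
        (rqubE (((1 - A' k) * B k) * r)) : ℂ))
        = (RCLike.re (inner ℂ (rqubE ((1 - A' k) * r))
            (rqubE (((1 - A' k) * B k) * r)) : ℂ))
          - ‖rqubE (((1 - A' k) * B k) * r)‖ ^ 2 := by
      rw [key_tr, key_tr, key_norm, hcross, Matrix.trace_sub]
      simp [Complex.sub_re]
    have hCS : (RCLike.re (inner ℂ (rqubE ((1 - A' k) * r))
        (rqubE (((1 - A' k) * B k) * r)) : ℂ))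
        ≤ ‖rqubE ((1 - A' k) * r)‖ * ‖rqubE (((1 - A' k) * B k) * r)‖ :=
      re_inner_le_norm (𝕜 := ℂ) _ _
    show ‖rqubE ((1 - B (k + 1)) * r)‖ ^ 2
        ≤ ‖rqubE ((1 - B k) * r)‖ ^ 2 - ‖rqubE ((1 - A' k) * B k * r)‖ ^ 2
          + 2 * ‖rqubE ((1 - A' k) * r)‖ * ‖rqubE ((1 - A' k) * B k * r)‖
    rw [hnadd, hinner]
    linarith
  -- q ≤ e + Dn
  have hq_le : ∀ k, q k ≤ e k + Dn k := by
    intro k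
    have hid : (1 - A' k) * B k * r
        = (1 - A' k) * r - (1 - A' k) * ((1 - B k) * r) := by noncomm_ring
    show ‖rqubE ((1 - A' k) * B k * r)‖
        ≤ ‖rqubE ((1 - A' k) * r)‖ + ‖rqubE ((1 - B k) * r)‖
    rw [hid, rqubE_sub]
    refine (norm_sub_le _ _).trans ?_
    exact add_le_add le_rfl (rqub_contract _ _ (hA'H k) (hA'proj k))
  -- base facts
  have hF0 : F 0 = 0 := by
    show 1 - ‖rqubE (B 0 * r)‖ ^ 2 = 0
    rw [hB0, key_norm 1]
    simp [hρ1]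
  have hq0e : q 0 = e 0 := by
    show ‖rqubE ((1 - A' 0) * B 0 * r)‖ = ‖rqubE ((1 - A' 0) * r)‖
    rw [hB0, mul_one]
  have hD1e : Dn 1 = e 0 := by
    show ‖rqubE ((1 - B 1) * r)‖ = ‖rqubE ((1 - A' 0) * r)‖
    rw [hBs 0, hB0, mul_one]
  have base : F 1 + p' * Dn 1 ^ 2 ≤ (1 + p') * e 0 ^ 2 := by
    rw [hF_rec 0, hF0, hq0e, hD1e]
    nlinarith [sq_nonneg (e 0)]
  -- main induction
  have hkey := rqub_induction q e Dn F p p' hp hp' hmul hF_rec hd_rec base (m - 2)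
  rw [show m - 2 + 1 = m - 1 by omega] at hkey
  -- B m is the list product
  have htake : ∀ n, n ≤ m → B n = ((List.ofFn A).take n).reverse.prod := by
    intro n
    induction n with
    | zero => intro _; simp [hB0]
    | succ k ih =>
      intro hk
      have hk' : k < m := by omega
      have hts : (List.ofFn A).take (k + 1)
          = (List.ofFn A).take k ++ [A ⟨k, hk'⟩] := by
        rw [List.take_succ]
        congr 1
        simp [List.getElem?_ofFn, List.ofFnNthVal, hk']
      rw [hBs k, hts, List.reverse_append, ih (by omega)]
      simp [hA'def, hk']
  have hBm : B m = (List.ofFn A).reverse.prod := by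
    rw [htake m le_rfl, List.take_of_length_le (by simp)]
  have hSucc' : Succ = ‖rqubE (B m * r)‖ ^ 2 := by
    rw [hSucc, key_norm (B m), hBm]
    congr 1
    rw [Matrix.trace_mul_comm, ← mul_assoc]
  have hFailF : Fail = F m := by rw [hFail, hSucc']
  -- final Young step
  have hFm : F m = F (m - 1) + q (m - 1) ^ 2 := by
    have := hF_rec (m - 1)
    rwa [show m - 1 + 1 = m by omega] at this
  have hyoung : q (m - 1) ^ 2 ≤ p * e (m - 1) ^ 2 + p' * Dn (m - 1) ^ 2 := by
    have hq0 : (0 : ℝ) ≤ q (m - 1) := norm_nonneg _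
    have he0 : (0 : ℝ) ≤ e (m - 1) := norm_nonneg _
    have hD0 : (0 : ℝ) ≤ Dn (m - 1) := norm_nonneg _
    have h1 : q (m - 1) ^ 2 ≤ (e (m - 1) + Dn (m - 1)) ^ 2 := by
      nlinarith [hq_le (m - 1)]
    have h2 : (p - 1) * (p * e (m - 1) ^ 2 + p' * Dn (m - 1) ^ 2
        - (e (m - 1) + Dn (m - 1)) ^ 2) = ((p - 1) * e (m - 1) - Dn (m - 1)) ^ 2 := by
      linear_combination (Dn (m - 1)) ^ 2 * hfac
    nlinarith [sq_nonneg ((p - 1) * e (m - 1) - Dn (m - 1))]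
  -- ε in terms of e
  have heps : ∀ (t : ℕ) (h : t < m), e t ^ 2 = ε ⟨t, h⟩ := by
    intro t h
    have hAt : A' t = A ⟨t, h⟩ := by simp only [hA'def]; rw [dif_pos h]
    have h1 : e t ^ 2 = (((1 - A' t)ᴴ * (1 - A' t) * ρ).trace).re := key_norm _
    rw [h1, hQH t, hQP t, hAt, hε, Matrix.trace_mul_comm]
  -- sum conversion
  have hsum : ∑ t ∈ Finset.univ.filter (fun t : Fin m => 0 < t.val ∧ t.val < m - 1), ε t
      = ∑ t ∈ Finset.Ico 1 (m - 1), e t ^ 2 := by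
    rw [Finset.sum_filter]
    have hcongr : ∀ t : Fin m,
        (if 0 < t.val ∧ t.val < m - 1 then ε t else 0)
        = (fun k : ℕ => if 0 < k ∧ k < m - 1 then e k ^ 2 else 0) t.val := by
      intro t
      by_cases h : 0 < t.val ∧ t.val < m - 1
      · simp only [h, if_true]
        rw [heps t.val t.isLt]
      · simp [h]
    rw [Finset.sum_congr rfl (fun t _ => hcongr t),
      Fin.sum_univ_eq_sum_range (fun k : ℕ => if 0 < k ∧ k < m - 1 then e k ^ 2 else 0) m,
      ← Finset.sum_filter]
    congr 1
    ext k
    simp only [Finset.mem_filter, Finset.mem_range, Finset.mem_Ico]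
    omega
  rw [hsum, ← heps 0 (by omega), ← heps (m - 1) (by omega)]
  linarith [hkey, hFm, hyoung, hFailF]
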